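/- If a linear extension L of a partial order P contains no alternating 4-anticycle, then L contains no alternating 2k-anticycle for any k ≥ 2. -/
import Mathlib


variable {V : Type*}

/-- A strict partial order: irreflexive and transitive. -/
def IsPartialOrd (P : V → V → Prop) : Prop := Irreflexive P ∧ Transitive P

/-- A strict linear order: irreflexive, transitive, and total. -/
def IsLinearOrd (L : V → V → Prop) : Prop :=
  Irreflexive L ∧ Transitive L ∧ ∀ u v : V, u ≠ v → L u v ∨ L v u

/-- `L` is a linear extension of `P`. -/
def IsLinExt (P L : V → V → Prop) : Prop :=
  IsLinearOrd L ∧ ∀ u v : V, P u v → L u v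

/-- Four distinct elements `a0, b0, a1, b1` form a suborder `2+2` of `P`:
their only `P`-relations are `a0 ≺ b0` and `a1 ≺ b1`. -/
def IsTwoPlusTwo (P : V → V → Prop) (a0 b0 a1 b1 : V) : Prop :=
  ([a0, b0, a1, b1] : List V).Nodup ∧ P a0 b0 ∧ P a1 b1 ∧
  ¬ P b0 a0 ∧ ¬ P b1 a1 ∧
  ¬ P a0 a1 ∧ ¬ P a1 a0 ∧ ¬ P a0 b1 ∧ ¬ P b1 a0 ∧
  ¬ P a1 b0 ∧ ¬ P b0 a1 ∧ ¬ P b0 b1 ∧ ¬ P b1 b0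

/-- The linear extension `L` of `P` fulfills the `2+2` rule. -/
def TwoPlusTwoRule (P L : V → V → Prop) : Prop :=
  ∀ a0 b0 a1 b1 : V, IsTwoPlusTwo P a0 b0 a1 b1 → L b0 a1 ∨ L b1 a0

/-- Four distinct elements form an alternating 4-anticycle of `L` w.r.t. `P`. -/
def IsAlt4Anticycle (P L : V → V → Prop) (a0 b0 a1 b1 : V) : Prop :=
  ([a0, b0, a1, b1] : List V).Nodup ∧ P a0 b0 ∧ P a1 b1 ∧
  L a1 b0 ∧ ¬ P a1 b0 ∧ L a0 b1 ∧ ¬ P a0 b1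

/-- An alternating `2k`-anticycle of `L` w.r.t. `P`, given by `a, b : ZMod k → V`. -/
def IsAltAnticycle (P L : V → V → Prop) (k : ℕ) (a b : ZMod k → V) : Prop :=
  Function.Injective a ∧ Function.Injective b ∧ (∀ i j : ZMod k, a i ≠ b j) ∧
  ∀ i : ZMod k, P (a i) (b i) ∧ L (a (i + 1)) (b i) ∧ ¬ P (a (i + 1)) (b i)

/-- `P` is a linear-interval order: the intersection of a linear order and an
interval order (given by an interval representation `l`, `r`). -/
def IsLinearIntervalOrder (P : V → V → Prop) : Prop :=
  ∃ (L : V → V → Prop) (l r : V → ℝ), IsLinearOrd L ∧ (∀ v, l v ≤ r v) ∧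
    ∀ u v : V, P u v ↔ L u v ∧ r u < l v


lemma zmod_val_neg_one' {n : ℕ} [NeZero n] : (-1 : ZMod n).val = n - 1 := by
  obtain ⟨m, rfl⟩ : ∃ m, n = m + 1 :=
    ⟨n - 1, (Nat.succ_pred_eq_of_pos (Nat.pos_of_ne_zero (NeZero.ne n))).symm⟩
  simpa using ZMod.val_neg_one m

/-- Rotating an alternating anticycle gives an alternating anticycle. -/
lemma rot_anticycle {V : Type*} {P L : V → V → Prop} {k : ℕ} (c : ZMod k)
    {a b : ZMod k → V} (hC : IsAltAnticycle P L k a b) :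
    IsAltAnticycle P L k (fun j => a (j + c)) (fun j => b (j + c)) := by
  obtain ⟨ha, hb, hab, hcyc⟩ := hC
  refine ⟨fun x y h => by simpa using add_left_injective c (ha h),
          fun x y h => by simpa using add_left_injective c (hb h),
          fun i j => hab _ _, fun i => ?_⟩
  have h := hcyc (i + c)
  refine ⟨h.1, ?_, ?_⟩
  · show L (a (i + 1 + c)) (b (i + c))
    rw [show i + 1 + c = i + c + 1 from by ring]
    exact h.2.1
  · show ¬ P (a (i + 1 + c)) (b (i + c))
    rw [show i + 1 + c = i + c + 1 from by ring]
    exact h.2.2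

/-- Shortcut: a `2k`-anticycle with an extra chord `P (A (-1)) (B 0)` yields a
`2(k-1)`-anticycle. -/
lemma shortcut_anticycle {V : Type*} {P L : V → V → Prop} {k : ℕ} (hk : 3 ≤ k)
    {A B : ZMod k → V} (hC : IsAltAnticycle P L k A B) (hP0 : P (A (-1)) (B 0)) :
    ∃ a' b' : ZMod (k - 1) → V, IsAltAnticycle P L (k - 1) a' b' := by
  obtain ⟨hA, hB, hAB, hcyc⟩ := hC
  haveI : NeZero k := ⟨by omega⟩
  haveI : NeZero (k - 1) := ⟨by omega⟩
  set ι : ZMod (k - 1) → ZMod k := fun j => ((j.val : ℕ) : ZMod k) with hι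
  have hval : ∀ j : ZMod (k - 1), (ι j).val = j.val := fun j =>
    ZMod.val_cast_of_lt (lt_trans (ZMod.val_lt j) (by omega))
  have hιinj : Function.Injective ι := by
    intro x y h
    have hxy : (ι x).val = (ι y).val := by rw [h]
    rw [hval, hval] at hxy
    exact ZMod.val_injective _ hxy
  have hneg1 : (-1 : ZMod k).val = k - 1 := zmod_val_neg_one'
  have hneg1' : ((k - 1 : ℕ) : ZMod k) = -1 := by
    apply ZMod.val_injective
    rw [ZMod.val_cast_of_lt (by omega), hneg1]
  have hιne : ∀ j : ZMod (k - 1), ι j ≠ -1 := by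
    intro j h
    have h1 := hval j
    rw [h, hneg1] at h1
    have := ZMod.val_lt j
    omega
  have hι0 : ι 0 = 0 := by simp [hι, ZMod.val_zero]
  refine ⟨fun j => if j = 0 then A (-1) else A (ι j), fun j => B (ι j), ?_, ?_, ?_, ?_⟩
  case refine_2 => exact fun x y h => hιinj (hB h)
  case refine_3 =>
    intro i j
    show (if i = 0 then A (-1) else A (ι i)) ≠ B (ι j)
    by_cases hi : i = 0
    · rw [if_pos hi]; exact hAB _ _
    · rw [if_neg hi]; exact hAB _ _
  case refine_1 =>
    intro x y h
    have h' : (if x = 0 then A (-1) else A (ι x)) = (if y = 0 then A (-1) else A (ι y)) := h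
    by_cases hx : x = 0 <;> by_cases hy : y = 0
    · rw [hx, hy]
    · rw [if_pos hx, if_neg hy] at h'
      exact absurd (hA h').symm (hιne y)
    · rw [if_neg hx, if_pos hy] at h'
      exact absurd (hA h') (hιne x)
    · rw [if_neg hx, if_neg hy] at h'
      exact hιinj (hA h')
  case refine_4 =>
    have hsucc : ∀ j : ZMod (k - 1),
        (if j + 1 = 0 then A (-1) else A (ι (j + 1))) = A (ι j + 1) := by
      intro j
      by_cases h0 : j + 1 = 0
      · rw [if_pos h0]
        have hj : j = -1 := by linear_combination h0
        have hjval : j.val = k - 2 := by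
          rw [hj]
          have h1 : (-1 : ZMod (k - 1)).val = (k - 1) - 1 := zmod_val_neg_one'
          omega
        have hkey : ι j + 1 = -1 := by
          rw [← hneg1']
          have h2 : ι j = ((k - 2 : ℕ) : ZMod k) := by rw [hι]; simp only; rw [hjval]
          rw [h2]
          rw [show ((k - 2 : ℕ) : ZMod k) + 1 = (((k - 2) + 1 : ℕ) : ZMod k) from by push_cast; ring]
          congr 1
          omega
        rw [hkey]
      · rw [if_neg h0]
        have hjv : j.val + 1 < k - 1 := by
          have hlt := ZMod.val_lt j
          rcases Nat.lt_or_ge (j.val + 1) (k - 1) with h | h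
          · exact h
          · exfalso
            apply h0
            have hjval : j.val = k - 2 := by omega
            have hj : j = ((k - 2 : ℕ) : ZMod (k - 1)) := by
              rw [← hjval]
              exact (ZMod.natCast_zmod_val j).symm
            rw [hj,
              show ((k - 2 : ℕ) : ZMod (k - 1)) + 1 = (((k - 2) + 1 : ℕ) : ZMod (k - 1)) from by
                push_cast; ring,
              show (k - 2) + 1 = k - 1 from by omega]
            exact ZMod.natCast_self (k - 1)
        have hsv : (j + 1).val = j.val + 1 := by
          have hj1 : j + 1 = ((j.val + 1 : ℕ) : ZMod (k - 1)) := by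
            push_cast [ZMod.natCast_zmod_val]
            rfl
          rw [hj1]
          exact ZMod.val_cast_of_lt hjv
        congr 1
        rw [hι]
        simp only
        rw [hsv]
        push_cast
        ring
    intro j
    have hedge := hcyc (ι j)
    refine ⟨?_, ?_, ?_⟩
    · show P (if j = 0 then A (-1) else A (ι j)) (B (ι j))
      by_cases hj : j = 0
      · rw [if_pos hj, hj, hι0]
        exact hP0
      · rw [if_neg hj]
        exact hedge.1
    · show L (if j + 1 = 0 then A (-1) else A (ι (j + 1))) (B (ι j))
      rw [hsucc j]
      exact hedge.2.1
    · show ¬ P (if j + 1 = 0 then A (-1) else A (ι (j + 1))) (B (ι j))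
      rw [hsucc j]
      exact hedge.2.2

theorem stmt2 {V : Type*} [Fintype V] (P L : V → V → Prop)
    (hP : IsPartialOrd P) (hL : IsLinExt P L)
    (h4 : ∀ a0 b0 a1 b1 : V, ¬ IsAlt4Anticycle P L a0 b0 a1 b1) :
    ∀ k : ℕ, 2 ≤ k → ∀ a b : ZMod k → V, ¬ IsAltAnticycle P L k a b := by
  intro k
  induction k using Nat.strong_induction_on with
  | _ k ih =>
  intro hk a b hC
  obtain ⟨ha, hb, hab, hcyc⟩ := hC
  haveI : NeZero k := ⟨by omega⟩
  obtain ⟨⟨hLirr, hLtrans, hLtot⟩, hPL⟩ := hL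
  by_cases h1 : ∃ i : ZMod k, L (a i) (b (i + 1)) ∧ ¬ P (a i) (b (i + 1))
  · obtain ⟨i, hLi, hPi⟩ := h1
    apply h4 (a i) (b i) (a (i + 1)) (b (i + 1))
    have hne : i ≠ i + 1 := by
      intro h
      have h1 : ((1 : ℕ) : ZMod k) = 0 := by
        have : (1 : ZMod k) = 0 := by linear_combination -h
        exact_mod_cast this
      have hdvd := (ZMod.natCast_eq_zero_iff 1 k).mp h1
      have := Nat.le_of_dvd one_pos hdvd
      omega
    have d1 : a i ≠ b i := hab i i
    have d2 : a i ≠ a (i + 1) := fun h => hne (ha h)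
    have d3 : a i ≠ b (i + 1) := hab i (i + 1)
    have d4 : b i ≠ a (i + 1) := fun h => hab (i + 1) i h.symm
    have d5 : b i ≠ b (i + 1) := fun h => hne (hb h)
    have d6 : a (i + 1) ≠ b (i + 1) := hab (i + 1) (i + 1)
    exact ⟨by simp [d1, d2, d3, d4, d5, d6], (hcyc i).1, (hcyc (i + 1)).1,
      (hcyc i).2.1, (hcyc i).2.2, hLi, hPi⟩
  · push_neg at h1
    by_cases h2 : ∃ i : ZMod k, P (a i) (b (i + 1))
    · obtain ⟨i, hPi⟩ := h2
      rcases Nat.lt_or_ge k 3 with hk2 | hk3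
      · have hk2 : k = 2 := by omega
        subst hk2
        have heq : i + 1 + 1 = i := by
          have : ((2 : ℕ) : ZMod 2) = 0 := ZMod.natCast_self 2
          have h2 : (1 : ZMod 2) + 1 = 0 := by exact_mod_cast this
          linear_combination h2
        have := (hcyc (i + 1)).2.2
        rw [heq] at this
        exact this hPi
      · have hrot : IsAltAnticycle P L k (fun j => a (j + (i + 1))) (fun j => b (j + (i + 1))) :=
          rot_anticycle (i + 1) ⟨ha, hb, hab, hcyc⟩
        have hP0 : P ((fun j => a (j + (i + 1))) (-1)) ((fun j => b (j + (i + 1))) 0) := by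
          simp only
          have h1 : (-1 : ZMod k) + (i + 1) = i := by ring
          have h2 : (0 : ZMod k) + (i + 1) = i + 1 := by ring
          rw [h1, h2]
          exact hPi
        obtain ⟨a', b', hC'⟩ := shortcut_anticycle hk3 hrot hP0
        exact ih (k - 1) (by omega) (by omega) a' b' hC'
    · push_neg at h2
      have hdown : ∀ i : ZMod k, L (b (i + 1)) (b i) := by
        intro i
        have hne : a i ≠ b (i + 1) := hab i (i + 1)
        have hLb : L (b (i + 1)) (a i) := by
          rcases hLtot _ _ hne with h | h
          · exact absurd (h1 i h) (h2 i)
          · exact h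
        exact hLtrans hLb (hPL _ _ (hcyc i).1)
      have key : ∀ n : ℕ, L (b ((n + 1 : ℕ) : ZMod k)) (b 0) := by
        intro n
        induction n with
        | zero => simpa using hdown 0
        | succ n ihn =>
          have h := hdown ((n + 1 : ℕ) : ZMod k)
          have hcast : (((n + 1 : ℕ) : ZMod k) + 1) = ((n + 1 + 1 : ℕ) : ZMod k) := by
            push_cast; ring
          rw [hcast] at h
          exact hLtrans h ihn
      have hk0 := key (k - 1)
      have : ((k - 1 + 1 : ℕ) : ZMod k) = 0 := by
        rw [Nat.sub_add_cancel (by omega)]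
        exact ZMod.natCast_self k
      rw [this] at hk0
      exact hLirr _ hk0
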